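/- For the root system A_3 and any even integer q ≥ 2, ample polytopes are not diagonally split: the class of z = (1/2)α_1 + (1/2)α_3 in (1/q)Y / Y has no representative z̃ ∈ (1/q)Y with |⟨w z̃, ω_i⟩| < 1 for all Weyl group elements w and all fundamental coweights ω_i; in particular ⟨s_2 z, ω_2⟩ = 1. -/

import Mathlib

open scoped BigOperators

/-- The simple reflection `s_i` acting on root coordinates, where `C k i = ⟨α_k, α_i^∨⟩`. -/
def qRefl {n : ℕ} (C : Matrix (Fin n) (Fin n) ℤ) (i : Fin n) (v : Fin n → ℚ) :
    Fin n → ℚ :=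
  fun j => if j = i then v i - ∑ k, (C k i : ℚ) * v k else v j

/-- The action on root coordinates of the Weyl group element given by the word `l`. -/
def weylAct {n : ℕ} (C : Matrix (Fin n) (Fin n) ℤ) (l : List (Fin n)) (v : Fin n → ℚ) :
    Fin n → ℚ :=
  l.foldl (fun u i => qRefl C i u) v

/-- The Cartan matrix of `A₃`, with the simple roots `α₁, α₂, α₃` linearly ordered
(index `1` is the central vertex `α₂`). -/
def cartanA3 : Matrix (Fin 3) (Fin 3) ℤ := !![2, -1, 0; -1, 2, -1; 0, -1, 2]

/-- The element `z = (1/2) α₁ + (1/2) α₃` in root coordinates. -/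
def zA3 : Fin 3 → ℚ := ![1/2, 0, 1/2]

/-- For the root system `A₃` and any even `q ≥ 2`, ample polytopes are not
diagonally split: the class of `z = (1/2)α₁ + (1/2)α₃` in `(1/q)Y / Y` has no
representative `z̃ ∈ (1/q)Y` with `|⟨w z̃, ωᵢ⟩| < 1` for all Weyl group elements `w` and
all fundamental coweights `ωᵢ`; in particular `⟨s₂ z, ω₂⟩ = 1`. -/

lemma w1A3 (v : Fin 3 → ℚ) : weylAct cartanA3 [1] v 1 = v 0 - v 1 + v 2 := by
  simp [weylAct, qRefl, cartanA3, Fin.sum_univ_three]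
  ring

lemma w01A3 (v : Fin 3 → ℚ) : weylAct cartanA3 [0,1] v 1 = -v 0 + v 2 := by
  simp [weylAct, qRefl, cartanA3, Fin.sum_univ_three]
  ring

lemma w21A3 (v : Fin 3 → ℚ) : weylAct cartanA3 [2,1] v 1 = v 0 - v 2 := by
  simp [weylAct, qRefl, cartanA3, Fin.sum_univ_three]
  ring

lemma half_cases (x : ℚ) (n : ℤ) (hn : x - 2⁻¹ = n) (hx : |x| < 1) :
    x = 1/2 ∨ x = -1/2 := by
  rw [abs_lt] at hx
  have h1 : (-2 : ℚ) < 2 * n + 1 := by push_cast; linarith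
  have h2 : (2 * n + 1 : ℚ) < 2 := by push_cast; linarith
  have h1' : (-2 : ℤ) < 2 * n + 1 := by exact_mod_cast h1
  have h2' : (2 * n + 1 : ℤ) < 2 := by exact_mod_cast h2
  have hn' : n = 0 ∨ n = -1 := by omega
  rcases hn' with h | h <;> rw [h] at hn
  · left; push_cast at hn; linarith
  · right; push_cast at hn; linarith

theorem stmt17 (q : ℤ) (hq : 2 ≤ q) (heven : Even q) :
    (¬ ∃ zt : Fin 3 → ℚ,
      (∀ i, ∃ n : ℤ, (q : ℚ) * zt i = n) ∧
      (∀ i, ∃ n : ℤ, zt i - zA3 i = n) ∧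
      ∀ (l : List (Fin 3)) (i : Fin 3), |weylAct cartanA3 l zt i| < 1) ∧
    weylAct cartanA3 [1] zA3 1 = 1 := by
  constructor
  · rintro ⟨zt, -, h2, h3⟩
    obtain ⟨n0, hn0⟩ := h2 0
    obtain ⟨n1, hn1⟩ := h2 1
    obtain ⟨n2, hn2⟩ := h2 2
    simp [zA3] at hn0 hn1 hn2
    have hz1 : zt 1 = 0 := by
      have := h3 [] 1
      simp [weylAct] at this
      rw [hn1, abs_lt] at this
      have : n1 = 0 := by
        have a : (-1 : ℤ) < n1 := by exact_mod_cast this.1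
        have b : n1 < 1 := by exact_mod_cast this.2
        omega
      rw [this] at hn1; simpa using hn1
    have hb0 : |zt 0| < 1 := by simpa [weylAct] using h3 [] 0
    have hb2 : |zt 2| < 1 := by simpa [weylAct] using h3 [] 2
    have c0 := half_cases (zt 0) n0 hn0 hb0
    have c2 := half_cases (zt 2) n2 hn2 hb2
    have ha := h3 [1] 1
    have hb := h3 [0,1] 1
    have hc := h3 [2,1] 1
    rw [w1A3, abs_lt] at ha
    rw [w01A3, abs_lt] at hb
    rw [w21A3, abs_lt] at hc
    rcases c0 with e0 | e0 <;> rcases c2 with e2 | e2 <;>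
      simp only [e0, e2, hz1] at ha hb hc <;> linarith [ha.1, ha.2, hb.1, hb.2, hc.1, hc.2]
  · rw [w1A3]
    norm_num [zA3, Matrix.cons_val_two, Matrix.vecHead, Matrix.vecTail]
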